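/- arXiv:0807.1690 — 3 statements merged into one kernel-verified Lean document; each statement's English description precedes it below -/
import Mathlib

section
/- Let M_n(t) be the (n-1)×(n-1) tridiagonal matrix with diagonal entries t_i + t_{i+1} (for i = 1,…,n-1) and off-diagonal entries (M_n)_{i,i+1} = (M_n)_{i+1,i} = -t_{i+1}, over the polynomial ring ℤ[t_1,…,t_n]. Then det M_n(t) = Σ_{i=1}^n Π_{j≠i} t_j, the Kirchhoff polynomial of the n-th banana graph. -/
open Finset
open MvPolynomial

noncomputable def bananaA (m : ℕ) : Matrix (Fin m) (Fin m) (MvPolynomial ℕ ℤ) :=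
  Matrix.of fun i j =>
    if (i : ℕ) = (j : ℕ) then X (i : ℕ) + X ((i : ℕ) + 1)
    else if (i : ℕ) + 1 = (j : ℕ) ∨ (j : ℕ) + 1 = (i : ℕ) then
      -(X (max (i : ℕ) (j : ℕ)) : MvPolynomial ℕ ℤ)
    else 0

noncomputable def bananaS (k : ℕ) : MvPolynomial ℕ ℤ :=
  ∑ i ∈ Finset.range k, ∏ j ∈ (Finset.range k).erase i, X j

lemma bananaS_succ (k : ℕ) :
    bananaS (k+1) = X k * bananaS k + ∏ j ∈ Finset.range k, X j := by
  unfold bananaS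
  rw [Finset.sum_range_succ, Finset.range_add_one, Finset.erase_insert (by simp)]
  congr 1
  rw [Finset.mul_sum]
  refine Finset.sum_congr rfl fun i hi => ?_
  have hik : k ≠ i := by simp only [Finset.mem_range] at hi; omega
  rw [Finset.erase_insert_of_ne hik, Finset.prod_insert (by simp)]

lemma bananaA_submatrix {m m' : ℕ} (f g : Fin m' → Fin m)
    (hf : ∀ i, ((f i) : ℕ) = (i : ℕ)) (hg : ∀ j, ((g j) : ℕ) = (j : ℕ)) :
    (bananaA m).submatrix f g = bananaA m' := by
  ext i j
  simp [bananaA, Matrix.submatrix_apply, hf, hg]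

lemma bananaB_det (m : ℕ) :
    ((bananaA (m+2)).submatrix Fin.castSucc (Fin.castSucc (Fin.last m)).succAbove).det
      = -(X (m+1)) * (bananaA m).det := by
  rw [Matrix.det_succ_column _ (Fin.last m),
    Finset.sum_eq_single_of_mem (Fin.last m) (Finset.mem_univ _)]
  · have hminor : ((bananaA (m+2)).submatrix Fin.castSucc
        (Fin.castSucc (Fin.last m)).succAbove).submatrix
        (Fin.last m).succAbove (Fin.last m).succAbove = bananaA m := by
      rw [Fin.succAbove_last, Matrix.submatrix_submatrix]
      refine bananaA_submatrix _ _ (fun i => by simp) (fun j => ?_)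
      simp only [Function.comp_apply]
      rw [Fin.succAbove_castSucc_of_lt _ _ (by simp [Fin.lt_def, j.isLt])]
      simp
    have hentry : (bananaA (m+2)).submatrix Fin.castSucc
        (Fin.castSucc (Fin.last m)).succAbove (Fin.last m) (Fin.last m)
        = -(X (m+1)) := by
      simp only [Matrix.submatrix_apply, Fin.succAbove_castSucc_self]
      simp [bananaA]
    rw [hminor, hentry]
    have hs : ((-1 : MvPolynomial ℕ ℤ)) ^ ((Fin.last m : ℕ) + (Fin.last m : ℕ)) = 1 := by
      rw [show ((Fin.last m : ℕ) + (Fin.last m : ℕ)) = 2 * m by simp; ring, pow_mul]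
      norm_num
    rw [hs]; ring
  · intro b _ hbne
    have hb1 : (b : ℕ) ≠ m := fun h => hbne (Fin.ext (by simpa using h))
    have hb2 : (b : ℕ) < m + 1 := b.isLt
    have hz : (bananaA (m+2)).submatrix Fin.castSucc
        (Fin.castSucc (Fin.last m)).succAbove b (Fin.last m) = 0 := by
      simp only [Matrix.submatrix_apply, Fin.succAbove_castSucc_self]
      simp only [bananaA, Matrix.of_apply, Fin.coe_castSucc, Fin.val_succ, Fin.val_last]
      rw [if_neg (by omega), if_neg (by omega)]
    rw [hz]; ring

lemma banana_det_step (m : ℕ) :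
    (bananaA (m+2)).det
      = (X (m+1) + X (m+2)) * (bananaA (m+1)).det
        - X (m+1) ^ 2 * (bananaA m).det := by
  rw [Matrix.det_succ_row (bananaA (m+2)) (Fin.last (m+1)),
    ← Finset.add_sum_erase _ _ (Finset.mem_univ (Fin.last (m+1)))]
  have hterm2 : ∑ j ∈ Finset.univ.erase (Fin.last (m+1)),
      (-1) ^ ((Fin.last (m+1) : ℕ) + (j : ℕ)) * bananaA (m+2) (Fin.last (m+1)) j *
        ((bananaA (m+2)).submatrix (Fin.last (m+1)).succAbove j.succAbove).det
      = X (m+1) * ((bananaA (m+2)).submatrix (Fin.last (m+1)).succAbove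
          (Fin.castSucc (Fin.last m)).succAbove).det := by
    rw [Finset.sum_eq_single_of_mem (Fin.castSucc (Fin.last m))]
    · have hentry : bananaA (m+2) (Fin.last (m+1)) (Fin.castSucc (Fin.last m))
          = -(X (m+1)) := by
        simp [bananaA]
      have hs : ((-1 : MvPolynomial ℕ ℤ)) ^
          ((Fin.last (m+1) : ℕ) + ((Fin.castSucc (Fin.last m)) : ℕ)) = -1 := by
        rw [show ((Fin.last (m+1) : ℕ) + ((Fin.castSucc (Fin.last m)) : ℕ)) = 2 * m + 1
          by simp; ring, pow_succ, pow_mul]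
        norm_num
      rw [hentry, hs]; ring
    · exact Finset.mem_erase.mpr ⟨fun h => by simpa [Fin.ext_iff] using h, Finset.mem_univ _⟩
    · intro b hb hbne
      have hb1 : (b : ℕ) ≠ m + 1 := fun h =>
        (Finset.mem_erase.mp hb).1 (Fin.ext (by simpa using h))
      have hb2 : (b : ℕ) ≠ m := fun h => hbne (Fin.ext (by simpa using h))
      have hb3 : (b : ℕ) < m + 2 := b.isLt
      have hz : bananaA (m+2) (Fin.last (m+1)) b = 0 := by
        simp only [bananaA, Matrix.of_apply, Fin.val_last]
        rw [if_neg (by omega), if_neg (by omega)]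
      rw [hz]; ring
  rw [hterm2, Fin.succAbove_last, bananaB_det,
    bananaA_submatrix Fin.castSucc Fin.castSucc (fun i => by simp) (fun j => by simp)]
  have hentry : bananaA (m+2) (Fin.last (m+1)) (Fin.last (m+1))
      = X (m+1) + X (m+2) := by simp [bananaA]
  have hs : ((-1 : MvPolynomial ℕ ℤ)) ^
      ((Fin.last (m+1) : ℕ) + ((Fin.last (m+1)) : ℕ)) = 1 := by
    rw [show ((Fin.last (m+1) : ℕ) + ((Fin.last (m+1)) : ℕ)) = 2 * (m+1) by simp; ring, pow_mul]
    norm_num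
  rw [hentry, hs]; ring

lemma bananaS_rec (m : ℕ) :
    (X (m+1) + X (m+2)) * bananaS (m+2) - X (m+1) ^ 2 * bananaS (m+1)
      = bananaS (m+3) := by
  have h1 := bananaS_succ (m+1)
  have h2 := bananaS_succ (m+2)
  have h3 : ∏ j ∈ Finset.range (m+2), X j
      = (∏ j ∈ Finset.range (m+1), (X j : MvPolynomial ℕ ℤ)) * X (m+1) :=
    Finset.prod_range_succ _ _
  rw [h2, h3, h1]; ring

lemma bananaA_det (m : ℕ) : (bananaA m).det = bananaS (m+1) := by
  induction m using Nat.twoStepInduction with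
  | zero =>
    rw [Matrix.det_fin_zero]
    simp [bananaS]
  | one =>
    rw [Matrix.det_fin_one]
    simp only [bananaA, Matrix.of_apply]
    rw [if_pos trivial, show bananaS (1+1) = bananaS 2 from rfl,
      show bananaS 2 = ∑ i ∈ Finset.range 2, ∏ j ∈ (Finset.range 2).erase i, X j from rfl,
      Finset.sum_range_succ, Finset.sum_range_succ, Finset.sum_range_zero,
      show (Finset.range 2).erase 0 = {1} from rfl,
      show (Finset.range 2).erase 1 = {0} from rfl,
      Finset.prod_singleton, Finset.prod_singleton]
    show X 0 + X (0+1) = 0 + X 1 + X 0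
    ring
  | more m ih ih1 =>
    rw [banana_det_step, ih, ih1, bananaS_rec]

/-- The determinant of the (n-1)×(n-1) tridiagonal matrix with diagonal entries
t_i + t_{i+1} and off-diagonal entries -t_{i+1} equals the Kirchhoff polynomial
Σ_{i=1}^n Π_{j≠i} t_j of the n-th banana graph (here t_{k+1} = X k, 0-indexed). -/
theorem banana_det_eq_kirchhoff (n : ℕ) (hn : 2 ≤ n) :
    Matrix.det (Matrix.of fun i j : Fin (n-1) =>
      if (i : ℕ) = (j : ℕ) then
        MvPolynomial.X (i : ℕ) + MvPolynomial.X ((i : ℕ) + 1)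
      else if (i : ℕ) + 1 = (j : ℕ) ∨ (j : ℕ) + 1 = (i : ℕ) then
        -(MvPolynomial.X (max (i : ℕ) (j : ℕ)) : MvPolynomial ℕ ℤ)
      else 0)
    = ∑ i ∈ Finset.range n, ∏ j ∈ (Finset.range n).erase i, MvPolynomial.X j := by
  have h := bananaA_det (n-1)
  rw [show n - 1 + 1 = n by omega] at h
  exact h
end

section
/- For n ≥ 2 and 0 ≤ k ≤ n-1: the coefficient of T^k in the polynomial (T^n - (-1)^n)/(T+1) + n·T^{n-2} ∈ ℤ[T], when rewritten in the basis {p_r(T) = ((1+T)^{r+1}-1)/T}_{r≥0}, equals (-1)^{n-1-k} C(n+1, k+2) + n·(-1)^{n-2-k} C(n-1, k+1) (where the second term is taken to be 0 for k = n-1). -/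
open Polynomial Finset

/-- The class of ℙ^r in the torus class: p_r(T) = ((1+T)^{r+1} - 1)/T. -/
noncomputable def projClass (r : ℕ) : Polynomial ℤ :=
  ∑ j ∈ Finset.range (r+1), Polynomial.C (((r+1).choose (j+1) : ℤ)) * X^j

lemma X_mul_projClass (r : ℕ) : (X : ℤ[X]) * projClass r = (1 + X)^(r+1) - 1 := by
  have h : ((1:ℤ[X]) + X)^(r+1) = ∑ k ∈ Finset.range (r+1+1), X^k * ((r+1).choose k : ℤ[X]) := by
    rw [show ((1:ℤ[X])+X) = X+1 from by ring, add_pow]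
    exact Finset.sum_congr rfl fun k _ => by rw [one_pow, mul_one]
  rw [projClass, Finset.mul_sum, h,
    Finset.sum_range_succ' (fun k => (X:ℤ[X])^k * ((r+1).choose k : ℤ[X])) (r+1)]
  simp only [pow_zero, Nat.choose_zero_right, Nat.cast_one, one_mul, mul_one, add_sub_cancel_right]
  exact Finset.sum_congr rfl fun j _ => by simp only [map_natCast]; ring

lemma key_pows (m : ℕ) : (X : ℤ[X])^m
    = ∑ j ∈ Finset.range (m+1), (-1:ℤ[X])^(m-j) * ((m.choose j : ℕ) : ℤ[X]) * (1+X)^j := by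
  have h : (X:ℤ[X])^m = ((1+X) + (-1))^m := by ring
  rw [h, add_pow]
  exact Finset.sum_congr rfl fun j _ => by ring

lemma hA_lemma (m : ℕ) :
    ∑ k ∈ Finset.range (m+2), (-1:ℤ[X])^(m+1-k) * ((m+2+1).choose (k+2) : ℤ[X]) * (1+X)^(k+2)
      = X^(m+2+1) - (-1:ℤ[X])^(m+2) * ((m+2+1 : ℕ) : ℤ[X]) * (1+X) - (-1:ℤ[X])^(m+2+1) := by
  have h := key_pows (m+2+1)
  rw [Finset.sum_range_succ' (fun j => (-1:ℤ[X])^(m+2+1-j) * ((m+2+1).choose j : ℤ[X]) * (1+X)^j) (m+2+1),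
    Finset.sum_range_succ' (fun i => (-1:ℤ[X])^(m+2+1-(i+1)) * ((m+2+1).choose (i+1) : ℤ[X]) * (1+X)^(i+1)) (m+2)] at h
  rw [show (∑ x ∈ Finset.range (m+2), (-1:ℤ[X])^(m+2+1-(x+1+1)) * ((m+2+1).choose (x+1+1) : ℤ[X]) * (1+X)^(x+1+1))
      = ∑ k ∈ Finset.range (m+2), (-1:ℤ[X])^(m+1-k) * ((m+2+1).choose (k+2) : ℤ[X]) * (1+X)^(k+2) from
    Finset.sum_congr rfl fun k _ => by rw [show m+2+1-(k+1+1) = m+1-k from by omega]] at h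
  simp only [zero_add, pow_one, pow_zero, Nat.choose_one_right, Nat.choose_zero_right,
    Nat.sub_zero, Nat.cast_one, mul_one, show m+2+1-1 = m+2 from rfl] at h
  linear_combination -h

lemma hB_lemma (m : ℕ) :
    ∑ k ∈ Finset.range (m+2), (-1:ℤ[X])^(m-k) * ((m+1).choose (k+1) : ℤ[X]) * (1+X)^(k+2)
      = (1+X) * X^(m+1) - (-1:ℤ[X])^(m+1) * (1+X) := by
  have h := key_pows (m+1)
  have h2 : (1+X) * X^(m+1)
      = ∑ j ∈ Finset.range (m+1+1), (-1:ℤ[X])^(m+1-j) * ((m+1).choose j : ℤ[X]) * (1+X)^(j+1) := by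
    rw [h, Finset.mul_sum]
    exact Finset.sum_congr rfl fun j _ => by ring
  have h3 := Finset.sum_range_succ
    (fun j => (-1:ℤ[X])^(m+1-j) * ((m+1).choose j : ℤ[X]) * (1+X)^(j+1)) (m+1+1)
  have h4 := Finset.sum_range_succ'
    (fun j => (-1:ℤ[X])^(m+1-j) * ((m+1).choose j : ℤ[X]) * (1+X)^(j+1)) (m+1+1)
  rw [show ((m+1).choose (m+1+1)) = 0 from Nat.choose_eq_zero_of_lt (by omega)] at h3
  rw [show (∑ x ∈ Finset.range (m+1+1), (-1:ℤ[X])^(m+1-(x+1)) * ((m+1).choose (x+1) : ℤ[X]) * (1+X)^(x+1+1))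
      = ∑ k ∈ Finset.range (m+2), (-1:ℤ[X])^(m-k) * ((m+1).choose (k+1) : ℤ[X]) * (1+X)^(k+2) from
    Finset.sum_congr (by norm_num) fun k _ => by rw [show m+1-(k+1) = m-k from by omega]] at h4
  simp only [Nat.cast_zero, mul_zero, zero_mul, add_zero, Nat.sub_zero, Nat.choose_zero_right,
    Nat.cast_one, mul_one, zero_add, pow_one, Nat.sub_self, pow_zero] at h3 h4
  linear_combination h3 - h2 - h4

/-- Rewriting (T^n - (-1)^n)/(T+1) + nT^{n-2} in the basis {p_r}: the coefficient of
p_k equals (-1)^{n-1-k} C(n+1, k+2) + n·(-1)^{n-2-k} C(n-1, k+1) (the second term being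
0 for k = n-1). -/
theorem banana_complement_proj_basis (n : ℕ) (hn : 2 ≤ n) (P : Polynomial ℤ)
    (hP : (X + 1) * P = X^n - Polynomial.C ((-1 : ℤ)^n)) :
    (∀ r, X * projClass r = (1 + X)^(r+1) - 1) ∧
    P + (n : Polynomial ℤ) * X^(n-2)
      = ∑ k ∈ Finset.range n,
          Polynomial.C ((-1 : ℤ)^(n-1-k) * ((n+1).choose (k+2) : ℤ)
            + (n : ℤ) * (-1 : ℤ)^(n-2-k) * ((n-1).choose (k+1) : ℤ)) * projClass k := by
  refine ⟨X_mul_projClass, ?_⟩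
  obtain ⟨m, rfl⟩ : ∃ m, n = m + 2 := ⟨n - 2, by omega⟩
  simp only [show m+2-1 = m+1 from by omega, show m+2-2 = m from by omega]
  have hA := hA_lemma m
  have hB := hB_lemma m
  have hA0 := congrArg (Polynomial.eval 0) hA
  have hB0 := congrArg (Polynomial.eval 0) hB
  simp only [Polynomial.eval_finset_sum, Polynomial.eval_mul, Polynomial.eval_pow,
    Polynomial.eval_add, Polynomial.eval_sub, Polynomial.eval_one, Polynomial.eval_X,
    Polynomial.eval_neg, Polynomial.eval_natCast, add_zero, one_pow, mul_one,
    zero_pow (by omega : m+2+1 ≠ 0), zero_pow (by omega : m+1 ≠ 0), mul_zero, zero_sub,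
    zero_mul] at hA0 hB0
  have hS : ∑ k ∈ Finset.range (m+2), ((-1:ℤ)^(m+1-k) * ((m+2+1).choose (k+2) : ℤ)
      + ((m+2 : ℕ) : ℤ) * (-1:ℤ)^(m-k) * ((m+1).choose (k+1) : ℤ)) = 0 := by
    rw [Finset.sum_add_distrib]
    simp only [mul_assoc]
    rw [← Finset.mul_sum, hA0, hB0]
    push_cast
    ring
  have hSpoly : ∑ k ∈ Finset.range (m+2), ((-1:ℤ[X])^(m+1-k) * ((m+2+1).choose (k+2) : ℤ[X])
      + ((m+2 : ℕ) : ℤ[X]) * (-1:ℤ[X])^(m-k) * ((m+1).choose (k+1) : ℤ[X])) = 0 := by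
    have h := congrArg (fun z : ℤ => (Polynomial.C z : ℤ[X])) hS
    simpa only [map_sum, map_add, map_mul, map_pow, map_neg, map_one, map_natCast,
      map_zero] using h
  have hne : (X * (X+1) : ℤ[X]) ≠ 0 :=
    mul_ne_zero Polynomial.X_ne_zero (by simpa using Polynomial.X_add_C_ne_zero (1:ℤ))
  apply mul_left_cancel₀ hne
  rw [Finset.mul_sum]
  have hterm : ∀ k ∈ Finset.range (m+2),
      X * (X+1) * (Polynomial.C ((-1:ℤ)^(m+1-k) * ((m+2+1).choose (k+2) : ℤ)
          + ((m+2 : ℕ) : ℤ) * (-1:ℤ)^(m-k) * ((m+1).choose (k+1) : ℤ)) * projClass k)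
        = (-1:ℤ[X])^(m+1-k) * ((m+2+1).choose (k+2) : ℤ[X]) * (1+X)^(k+2)
          + ((m+2 : ℕ) : ℤ[X]) * ((-1:ℤ[X])^(m-k) * ((m+1).choose (k+1) : ℤ[X]) * (1+X)^(k+2))
          - ((-1:ℤ[X])^(m+1-k) * ((m+2+1).choose (k+2) : ℤ[X])
              + ((m+2 : ℕ) : ℤ[X]) * (-1:ℤ[X])^(m-k) * ((m+1).choose (k+1) : ℤ[X])) * (1+X) := by
    intro k hk
    have hx := X_mul_projClass k
    rw [show X * (X+1) * (Polynomial.C ((-1:ℤ)^(m+1-k) * ((m+2+1).choose (k+2) : ℤ)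
          + ((m+2 : ℕ) : ℤ) * (-1:ℤ)^(m-k) * ((m+1).choose (k+1) : ℤ)) * projClass k)
        = (X+1) * Polynomial.C ((-1:ℤ)^(m+1-k) * ((m+2+1).choose (k+2) : ℤ)
          + ((m+2 : ℕ) : ℤ) * (-1:ℤ)^(m-k) * ((m+1).choose (k+1) : ℤ)) * (X * projClass k) from by ring,
      hx]
    simp only [map_add, map_mul, map_pow, map_neg, map_one, map_natCast]
    ring
  rw [Finset.sum_congr rfl hterm, Finset.sum_sub_distrib, Finset.sum_add_distrib,
    ← Finset.mul_sum, ← Finset.sum_mul, hA, hB, hSpoly, zero_mul, sub_zero]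
  rw [show X*(X+1)*(P + ((m+2:ℕ):ℤ[X]) * X^m)
      = X*((X+1)*P) + ((m+2:ℕ):ℤ[X])*(X^(m+1)*(X+1)) from by ring, hP]
  simp only [map_pow, map_neg, map_one]
  push_cast
  ring
end

section
/- For n ≥ 2 and 2 ≤ k ≤ n-1, the coefficient of H^k in the polynomial (1+H)^n - (1-H)^{n-1} - nH - H^n equals C(n,k) - C(n-1,k) = C(n-1,k-1) if k is even, and C(n,k) + C(n-1,k) if k is odd; the coefficient of H^1 is n - 1. In particular all coefficients of H^k for 1 ≤ k ≤ n-1 are positive. -/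
open Polynomial

lemma one_sub_X_pow_coeff (m k : ℕ) :
    ((1 - X : Polynomial ℤ) ^ m).coeff k = (-1)^k * (m.choose k : ℤ) := by
  have h : (1 - X : Polynomial ℤ) = -(X + C (-1)) := by
    simp [C_neg]; ring
  have h2 : ((-1 : Polynomial ℤ))^m = C ((-1)^m) := by simp
  rw [h, neg_pow, h2, mul_comm, coeff_mul_C, coeff_X_add_C_pow]
  rcases le_or_gt k m with hk | hk
  · rw [show (-1:ℤ)^(m-k) * (m.choose k : ℤ) * (-1)^m = (-1)^((m-k)+m) * m.choose k by ring,
      show (m-k)+m = k + 2*(m-k) by omega, pow_add, pow_mul]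
    simp
  · simp [Nat.choose_eq_zero_of_lt hk]

lemma banana_coeff_eq (n k : ℕ) (h2 : 2 ≤ k) (hk : k ≤ n - 1) :
    ((1 + X)^n - (1 - X)^(n-1) - (n : Polynomial ℤ) * X - X^n).coeff k
      = (n.choose k : ℤ) - (-1)^k * ((n-1).choose k : ℤ) := by
  have hkn : k ≠ n := by omega
  have hk1 : k ≠ 1 := by omega
  simp [coeff_one_add_X_pow, one_sub_X_pow_coeff, coeff_X_pow, coeff_X, hkn, hk1]
  omega

lemma pascal_int (n k : ℕ) (h2 : 2 ≤ k) (hk : k ≤ n - 1) :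
    (n.choose k : ℤ) - ((n-1).choose k : ℤ) = ((n-1).choose (k-1) : ℤ) := by
  obtain ⟨m, rfl⟩ : ∃ m, n = m + 1 := ⟨n - 1, by omega⟩
  obtain ⟨j, rfl⟩ : ∃ j, k = j + 1 := ⟨k - 1, by omega⟩
  simp only [Nat.add_sub_cancel, Nat.choose_succ_succ]
  push_cast
  ring

/-- The coefficients of the CSM class polynomial (1+H)^n - (1-H)^{n-1} - nH - H^n of the
banana hypersurface: for 2 ≤ k ≤ n-1 the coefficient of H^k is C(n,k) - C(n-1,k)
(= C(n-1,k-1)) if k is even and C(n,k) + C(n-1,k) if k is odd; the coefficient of H is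
n-1; in particular all coefficients of H^k for 1 ≤ k ≤ n-1 are positive. -/
theorem banana_csm_coefficients (n : ℕ) (hn : 2 ≤ n) :
    (∀ k, 2 ≤ k → k ≤ n-1 →
      ((1 + X)^n - (1 - X)^(n-1) - (n : Polynomial ℤ) * X - X^n).coeff k
        = if Even k then (n.choose k : ℤ) - ((n-1).choose k : ℤ)
          else (n.choose k : ℤ) + ((n-1).choose k : ℤ)) ∧
    (∀ k, 2 ≤ k → k ≤ n-1 → Even k →
      (n.choose k : ℤ) - ((n-1).choose k : ℤ) = ((n-1).choose (k-1) : ℤ)) ∧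
    ((1 + X)^n - (1 - X)^(n-1) - (n : Polynomial ℤ) * X - X^n).coeff 1 = (n : ℤ) - 1 ∧
    (∀ k, 1 ≤ k → k ≤ n-1 →
      0 < ((1 + X)^n - (1 - X)^(n-1) - (n : Polynomial ℤ) * X - X^n).coeff k) := by
  have hmain : ∀ k, 2 ≤ k → k ≤ n-1 →
      ((1 + X)^n - (1 - X)^(n-1) - (n : Polynomial ℤ) * X - X^n).coeff k
        = if Even k then (n.choose k : ℤ) - ((n-1).choose k : ℤ)
          else (n.choose k : ℤ) + ((n-1).choose k : ℤ) := by
    intro k h2 hk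
    rw [banana_coeff_eq n k h2 hk]
    rcases Nat.even_or_odd k with he | ho
    · rw [if_pos he, he.neg_one_pow]; ring
    · rw [if_neg (Nat.not_even_iff_odd.mpr ho), ho.neg_one_pow]; ring
  have hone : ((1 + X)^n - (1 - X)^(n-1) - (n : Polynomial ℤ) * X - X^n).coeff 1
      = (n : ℤ) - 1 := by
    have h1n : 1 ≠ n := by omega
    simp [coeff_one_add_X_pow, one_sub_X_pow_coeff, coeff_X_pow, coeff_X, h1n,
      Nat.choose_one_right]
    omega
  refine ⟨hmain, fun k h2 hk _ => pascal_int n k h2 hk, hone, ?_⟩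
  intro k h1 hk
  rcases eq_or_lt_of_le h1 with rfl | h2
  · rw [hone]; have : (2:ℤ) ≤ n := by exact_mod_cast hn
    linarith
  · rw [hmain k h2 hk]
    rcases Nat.even_or_odd k with he | ho
    · rw [if_pos he, pascal_int n k h2 hk]
      exact_mod_cast Nat.choose_pos (by omega : k - 1 ≤ n - 1)
    · rw [if_neg (Nat.not_even_iff_odd.mpr ho)]
      have h1 : 0 < (n.choose k : ℤ) := by exact_mod_cast Nat.choose_pos (by omega : k ≤ n)
      have h2 : (0:ℤ) ≤ ((n-1).choose k : ℤ) := by positivity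
      linarith
end
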